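/- (Subclaim from the proof of Theorem 4.3: a linear cost approximator has bounded columns after normalization.) Let B ∈ ℝ^{n×m}, let w : {1,…,m} → ℝ with w(e) > 0 for all e, W = diag(w), let P ∈ ℝ^{k×n}, and let α ≥ 0. Suppose that ‖P c‖₁ ≤ α·‖c‖_OPT for every c ∈ ℝ^n in the range of B, where ‖c‖_OPT := inf{‖W f‖₁ : f ∈ ℝ^m, Bf = c}. Then for every y ∈ ℝ^k with ‖y‖∞ ≤ 1 we have ‖W^{−1} B^T P^T y‖∞ ≤ α. -/

import Mathlib

/-- The optimal transshipment cost `‖c‖_OPT = inf {‖Wf‖₁ : Bf = c}`. -/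
noncomputable def optCost {n m : ℕ} (B : Matrix (Fin n) (Fin m) ℝ)
    (w : Fin m → ℝ) (c : Fin n → ℝ) : ℝ :=
  sInf {t : ℝ | ∃ f : Fin m → ℝ, B.mulVec f = c ∧ (∑ e, |w e * f e|) = t}

/-- Subclaim from the proof of Theorem 4.3: if `‖Pc‖₁ ≤ α·‖c‖_OPT` for every
demand `c` in the range of `B`, then `‖W⁻¹BᵀPᵀy‖∞ ≤ α` for every `‖y‖∞ ≤ 1`.
The norms on the Pi types `Fin m → ℝ` and `Fin k → ℝ` are the sup norms. -/
theorem cost_approximator_bounded_columns (n m k : ℕ)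
    (B : Matrix (Fin n) (Fin m) ℝ) (w : Fin m → ℝ) (hw : ∀ e, 0 < w e)
    (P : Matrix (Fin k) (Fin n) ℝ) (α : ℝ) (hα : 0 ≤ α)
    (hP : ∀ c : Fin n → ℝ, (∃ f : Fin m → ℝ, B.mulVec f = c) →
      (∑ i, |P.mulVec c i|) ≤ α * optCost B w c) :
    ∀ y : Fin k → ℝ, ‖y‖ ≤ 1 →
      ‖(fun e => B.transpose.mulVec (P.transpose.mulVec y) e / w e)‖ ≤ α := by
  intro y hy
  rw [pi_norm_le_iff_of_nonneg hα]
  intro e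
  set c : Fin n → ℝ := B.mulVec (Pi.single e 1) with hc
  -- optCost bound
  have hmem : (w e) ∈ {t : ℝ | ∃ f : Fin m → ℝ, B.mulVec f = c ∧ (∑ e, |w e * f e|) = t} := by
    refine ⟨Pi.single e 1, rfl, ?_⟩
    rw [Fintype.sum_eq_single e]
    · simp [abs_of_pos (hw e)]
    · intro x hx
      simp [Pi.single_eq_of_ne hx]
  have hbdd : BddBelow {t : ℝ | ∃ f : Fin m → ℝ, B.mulVec f = c ∧ (∑ e, |w e * f e|) = t} := by
    refine ⟨0, fun t ht => ?_⟩
    obtain ⟨f, _, rfl⟩ := ht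
    positivity
  have hopt : optCost B w c ≤ w e := csInf_le hbdd hmem
  have h1 : (∑ i, |P.mulVec c i|) ≤ α * w e := by
    calc (∑ i, |P.mulVec c i|) ≤ α * optCost B w c := hP c ⟨_, rfl⟩
    _ ≤ α * w e := by exact mul_le_mul_of_nonneg_left hopt hα
  -- identify the entry
  have hentry : B.transpose.mulVec (P.transpose.mulVec y) e = ∑ j, y j * P.mulVec c j := by
    simp only [Matrix.mulVec, dotProduct, Matrix.transpose_apply, hc,
      Matrix.mulVec_single_one, Matrix.col_apply, mul_one, Finset.mul_sum, Finset.sum_mul]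
    rw [Finset.sum_comm]
    congr 1; ext i; congr 1; ext j; ring
  have habs : |B.transpose.mulVec (P.transpose.mulVec y) e| ≤ ∑ j, |P.mulVec c j| := by
    rw [hentry]
    calc |∑ j, y j * P.mulVec c j| ≤ ∑ j, |y j * P.mulVec c j| := Finset.abs_sum_le_sum_abs _ _
    _ ≤ ∑ j, |P.mulVec c j| := by
        apply Finset.sum_le_sum
        intro j _
        rw [abs_mul]
        have hyj : |y j| ≤ 1 := le_trans (norm_le_pi_norm y j) hy
        nlinarith [abs_nonneg (P.mulVec c j)]
  have : |B.transpose.mulVec (P.transpose.mulVec y) e| ≤ α * w e := le_trans habs h1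
  rw [Real.norm_eq_abs, abs_div, abs_of_pos (hw e), div_le_iff₀ (hw e)]
  linarith
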